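/- Let X ⊆ ℝ³ be a compact convex body, x ∈ ∂X, and suppose the set of normals to X at x contains two distinct vectors. Then x is not an extreme point of X if and only if there is a unique direction (up to sign) v, perpendicular to all normals at x, such that the line through x with direction v traverses x. -/

import Mathlib

open RealInnerProductSpace

/-- At a boundary point with at least two distinct normals, being a nonextreme
point is equivalent to the existence of a unique (up to scaling) traversing
direction, which is perpendicular to all normals at the point. -/
theorem nonextreme_iff_unique_traversing_direction
    (X : Set (EuclideanSpace ℝ (Fin 3)))
    (hX : IsCompact X) (hconv : Convex ℝ X) (hint : (interior X).Nonempty)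
    (x : EuclideanSpace ℝ (Fin 3)) (hx : x ∈ frontier X)
    (n₁ n₂ : EuclideanSpace ℝ (Fin 3)) (hn : n₁ ≠ n₂)
    (hn₁ : ‖n₁‖ = 1) (hn₂ : ‖n₂‖ = 1)
    (hnormal₁ : ∀ x' ∈ X, ⟪n₁, x'⟫ ≤ ⟪n₁, x⟫)
    (hnormal₂ : ∀ x' ∈ X, ⟪n₂, x'⟫ ≤ ⟪n₂, x⟫) :
    x ∉ X.extremePoints ℝ ↔
      ∃ v : EuclideanSpace ℝ (Fin 3), v ≠ 0 ∧
        (∀ m : EuclideanSpace ℝ (Fin 3), ‖m‖ = 1 →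
          (∀ x' ∈ X, ⟪m, x'⟫ ≤ ⟪m, x⟫) → ⟪m, v⟫ = 0) ∧
        (∃ ε > 0, ∀ t : ℝ, |t| < ε → x + t • v ∈ X) ∧
        (∀ w : EuclideanSpace ℝ (Fin 3), w ≠ 0 →
          (∃ ε > 0, ∀ t : ℝ, |t| < ε → x + t • w ∈ X) →
          ∃ c : ℝ, w = c • v) := by
  have hclosed : IsClosed X := hX.isClosed
  have hxX : x ∈ X := hclosed.closure_eq ▸ frontier_subset_closure hx
  -- any traversing direction is orthogonal to any normal
  have perp : ∀ u : EuclideanSpace ℝ (Fin 3),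
      (∃ ε > 0, ∀ t : ℝ, |t| < ε → x + t • u ∈ X) →
      ∀ m : EuclideanSpace ℝ (Fin 3), (∀ x' ∈ X, ⟪m, x'⟫ ≤ ⟪m, x⟫) →
      ⟪m, u⟫ = 0 := by
    intro u ⟨ε, hε, hu⟩ m hm
    have h1 := hm _ (hu (ε / 2) (by rw [abs_of_pos (by linarith)]; linarith))
    have h2 := hm _ (hu (-(ε / 2)) (by rw [abs_neg, abs_of_pos (by linarith)]; linarith))
    rw [inner_add_right, real_inner_smul_right] at h1 h2
    nlinarith
  -- n₂ ≠ -n₁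
  obtain ⟨y, hy⟩ := hint
  have hne' : n₂ ≠ -n₁ := by
    rintro rfl
    obtain ⟨δ, hδ, hball⟩ := Metric.isOpen_iff.1 isOpen_interior y hy
    have hmem : y + (δ / 2) • n₁ ∈ X := by
      apply interior_subset (hball ?_)
      rw [Metric.mem_ball, dist_eq_norm]
      have : y + (δ / 2) • n₁ - y = (δ / 2) • n₁ := by abel
      rw [this, norm_smul, hn₁, mul_one, Real.norm_eq_abs, abs_of_pos (by linarith : (0:ℝ) < δ / 2)]
      linarith
    have h1 := hnormal₁ _ hmem
    have h2 := hnormal₂ _ hmem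
    have h2' := hnormal₂ _ (interior_subset hy)
    simp only [inner_neg_left, neg_le_neg_iff] at h2 h2'
    rw [inner_add_right, real_inner_smul_right, real_inner_self_eq_norm_sq, hn₁] at h1 h2
    have hyx : ⟪n₁, y⟫ = ⟪n₁, x⟫ := le_antisymm (hnormal₁ _ (interior_subset hy)) h2'
    nlinarith
  -- linear independence of the two normals
  have hli : LinearIndependent ℝ ![n₁, n₂] := by
    rw [LinearIndependent.pair_iff' (by intro h; rw [h] at hn₁; simp at hn₁)]
    intro a ha
    have : |a| = 1 := by
      have := congrArg norm ha
      rwa [norm_smul, hn₁, hn₂, mul_one, Real.norm_eq_abs] at this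
    rcases abs_eq (by norm_num : (0:ℝ) ≤ 1) |>.1 this with rfl | rfl
    · rw [one_smul] at ha; exact hn ha
    · rw [neg_one_smul] at ha; exact hne' ha.symm
  -- the orthogonal complement of the span of the normals
  set K := (Submodule.span ℝ (Set.range ![n₁, n₂]))ᗮ with hK
  have hmemK : ∀ u : EuclideanSpace ℝ (Fin 3), ⟪n₁, u⟫ = 0 → ⟪n₂, u⟫ = 0 → u ∈ K := by
    intro u h1 h2
    rw [hK, Submodule.mem_orthogonal]
    intro w hw
    induction hw using Submodule.span_induction with
    | mem w hw =>
      obtain ⟨i, rfl⟩ := hw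
      fin_cases i
      · exact h1
      · exact h2
    | zero => simp
    | add a b _ _ ha hb => rw [inner_add_left, ha, hb, add_zero]
    | smul c a _ ha => rw [real_inner_smul_left, ha, mul_zero]
  have hrank : Module.finrank ℝ K = 1 := by
    have h2 : Module.finrank ℝ (Submodule.span ℝ (Set.range ![n₁, n₂])) = 2 := by
      rw [finrank_span_eq_card hli]; simp
    have key := (Submodule.span ℝ (Set.range ![n₁, n₂])).finrank_add_finrank_orthogonal
    rw [h2, ← hK] at key
    have h3 : Module.finrank ℝ (EuclideanSpace ℝ (Fin 3)) = 3 := by simp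
    rw [h3] at key
    omega
  have huniq : ∀ u ∈ K, ∀ w ∈ K, u ≠ 0 → ∃ c : ℝ, w = c • u := by
    intro u hu w hw hu0
    obtain ⟨c, hc⟩ := (finrank_eq_one_iff_of_nonzero' (⟨u, hu⟩ : K)
      (by simpa using hu0)).1 hrank ⟨w, hw⟩
    exact ⟨c, by simpa [eq_comm] using congrArg Subtype.val hc⟩
  constructor
  · -- forward direction
    intro hne
    rw [mem_extremePoints] at hne
    push_neg at hne
    obtain ⟨x₁, hx₁, x₂, hx₂, hseg, hnee⟩ := hne hxX
    obtain ⟨a, b, ha, hb, hab, hsum⟩ := hseg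
    have hx12 : x₁ ≠ x₂ := by
      rintro rfl
      have : x₁ = x := by
        rw [← hsum, ← add_smul, hab, one_smul]
      exact hnee this this
    set v := x₂ - x₁ with hv
    have hv0 : v ≠ 0 := sub_ne_zero.2 (Ne.symm hx12)
    have htrav : ∃ ε > 0, ∀ t : ℝ, |t| < ε → x + t • v ∈ X := by
      refine ⟨min a b, lt_min ha hb, fun t ht => ?_⟩
      have hta : -a < t ∧ t < a := abs_lt.1 (ht.trans_le (min_le_left _ _))
      have htb : -b < t ∧ t < b := abs_lt.1 (ht.trans_le (min_le_right _ _))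
      have : x + t • v = (a - t) • x₁ + (b + t) • x₂ := by
        rw [← hsum, hv, smul_sub, sub_smul, add_smul]
        abel
      rw [this]
      exact hconv hx₁ hx₂ (by linarith [hta.2]) (by linarith [htb.1]) (by linarith)
    refine ⟨v, hv0, fun m _ hm => perp v htrav m hm, htrav, ?_⟩
    intro w hw0 hwtrav
    exact huniq v (hmemK v (perp v htrav n₁ hnormal₁) (perp v htrav n₂ hnormal₂)) w
      (hmemK w (perp w hwtrav n₁ hnormal₁) (perp w hwtrav n₂ hnormal₂)) hv0
  · -- backward direction
    rintro ⟨v, hv0, _, ⟨ε, hε, htrav⟩, _⟩ hext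
    have hεv : (ε / 2) • v ≠ 0 := smul_ne_zero (by positivity) hv0
    have hp : x + (ε / 2) • v ∈ X := htrav (ε / 2) (by rw [abs_of_pos (by linarith)]; linarith)
    have hq : x + (-(ε / 2)) • v ∈ X :=
      htrav (-(ε / 2)) (by rw [abs_neg, abs_of_pos (by linarith)]; linarith)
    have hmem : x ∈ openSegment ℝ (x + (-(ε / 2)) • v) (x + (ε / 2) • v) := by
      refine ⟨1/2, 1/2, by norm_num, by norm_num, by norm_num, ?_⟩
      rw [smul_add, smul_add, neg_smul, smul_neg]
      module
    have := hext.2 hq hp hmem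
    exact hεv (by simpa using this)
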